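/- arXiv:math/9310231 — 2 statements merged into one kernel-verified Lean document; each statement's English description precedes it below -/
import Mathlib

section
/- The λ-natural norm is independent of the ambient dimension: let 0 < n ≤ p ≤ p' be integers, λ real with n ≤ λ ≤ p, and let A be a simplicial n-chain in ℝ^p, viewed also as a simplicial n-chain in ℝ^{p'} via the standard inclusion ℝ^p ⊂ ℝ^{p'}. Then the λ-natural norm of A computed in ℝ^p equals the λ-natural norm of A computed in ℝ^{p'}. -/
open MeasureTheory Filter Metric Set

noncomputable section

/-- Euclidean `m`-space `ℝ^m`. -/
abbrev Euc (m : ℕ) : Type := EuclideanSpace ℝ (Fin m)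

/-- An oriented `n`-simplex in `ℝ^m`, recorded by its ordered list of `n+1` vertices. -/
abbrev Splx (n m : ℕ) : Type := Fin (n + 1) → Euc m

/-- Formal sums `Σ aᵢ σᵢ` of oriented `n`-simplices in `ℝ^m` with real coefficients. -/
abbrev FormalSum (n m : ℕ) : Type := Splx n m →₀ ℝ

/-- Unbundled (raw) `n`-forms on `ℝ^m`: a scalar depending on a point and `n` vectors. -/
abbrev RawForm (n m : ℕ) : Type := Euc m → (Fin n → Euc m) → ℝ

/-- Continuous multilinear maps in `n` variables on `ℝ^m` (the value space of forms). -/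
abbrev CMM (n m : ℕ) : Type := ContinuousMultilinearMap ℝ (fun _ : Fin n => Euc m) ℝ

/-- A multilinear map is alternating. -/
def IsAlt {n m : ℕ} (g : CMM n m) : Prop :=
  ∀ (v : Fin n → Euc m) (i j : Fin n), i ≠ j → v i = v j → g v = 0

/-- A differential `n`-form on `ℝ^m`: an alternating-multilinear-map valued function. -/
def Form (n m : ℕ) : Type := {ω : Euc m → CMM n m // ∀ x, IsAlt (ω x)}

/-- The raw form underlying a differential form. -/
def Form.raw {n m : ℕ} (ω : Form n m) : RawForm n m := fun x v => ω.1 x v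

/-- The standard `n`-simplex as a subset of `ℝ^n`. -/
def stdSimplexSet (n : ℕ) : Set (Fin n → ℝ) := {t | (∀ i, 0 ≤ t i) ∧ ∑ i, t i ≤ 1}

/-- The (Riemann/Lebesgue) integral of a raw `n`-form over an oriented `n`-simplex,
computed through the affine parametrization by the standard simplex. -/
def simplexIntegral {n m : ℕ} (σ : Splx n m) (ω : RawForm n m) : ℝ :=
  ∫ t in stdSimplexSet n,
    ω (σ 0 + ∑ i : Fin n, t i • (σ i.succ - σ 0)) (fun i => σ i.succ - σ 0)

/-- Integration of a raw `n`-form over formal sums, as a linear map in the chain. -/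
def chainIntegralL (n m : ℕ) (ω : RawForm n m) : FormalSum n m →ₗ[ℝ] ℝ :=
  Finsupp.linearCombination ℝ (fun σ => simplexIntegral σ ω)

/-- `∫_A ω` for a formal sum `A = Σ aᵢ σᵢ`. -/
def chainIntegral {n m : ℕ} (A : FormalSum n m) (ω : RawForm n m) : ℝ :=
  chainIntegralL n m ω A

/-- The submodule of formal sums that are *null*, i.e. integrate to `0` against every
continuous differential `n`-form.  Two formal sums define the same simplicial chain
(the coefficient functions on each affine `n`-plane agree off a Lebesgue null set)
precisely when their difference is null. -/
def nullChains (n m : ℕ) : Submodule ℝ (FormalSum n m) :=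
  ⨅ ω ∈ {ω : Form n m | Continuous ω.1}, LinearMap.ker (chainIntegralL n m ω.raw)

/-- Equivalence of formal sums: they represent the same simplicial chain. -/
def ChainEquiv {n m : ℕ} (A B : FormalSum n m) : Prop := A - B ∈ nullChains n m

/-- The `n`-dimensional volume of an `n`-simplex in `ℝ^m` (Gram determinant formula). -/
def simplexVolume {n m : ℕ} (σ : Splx n m) : ℝ :=
  Real.sqrt (Matrix.det (Matrix.of fun i j : Fin n =>
    (inner ℝ (σ i.succ - σ 0) (σ j.succ - σ 0) : ℝ))) / (Nat.factorial n : ℝ)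

/-- The `n`-element coordinate subsets of `Fin m`, indexing coordinate `n`-planes. -/
def coordPlanes (m k : ℕ) : Finset (Finset (Fin m)) :=
  Finset.univ.filter fun s => s.card = k

/-- Orthogonal projection of `ℝ^m` onto the coordinate plane indexed by `s`. -/
def coordProj (m : ℕ) (s : Finset (Fin m)) : Euc m → Euc m :=
  fun x => WithLp.toLp 2 (fun i => if i ∈ s then x i else 0)

/-- The projected `λ`-mass `M_{λ,π}(A) = inf { Σ |aᵢ| (Mₙ(π σᵢ))^{λ/n} : Σ aᵢσᵢ ∼ A }`. -/
def projMass (n m : ℕ) (lam : ℝ) (p : Euc m → Euc m) (A : FormalSum n m) : ℝ :=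
  sInf { r | ∃ B : FormalSum n m, ChainEquiv B A ∧
    r = ∑ σ ∈ B.support, |B σ| * simplexVolume (p ∘ σ) ^ (lam / n) }

/-- The `n`-mass of a simplicial `n`-chain. -/
def massNorm (n m : ℕ) (A : FormalSum n m) : ℝ := projMass n m n id A

/-- The simplicial boundary operator on formal sums. -/
def boundaryL (n m : ℕ) : FormalSum (n + 1) m →ₗ[ℝ] FormalSum n m :=
  Finsupp.linearCombination ℝ (fun σ => ∑ i : Fin (n + 2),
    Finsupp.single (fun j => σ (i.succAbove j)) ((-1 : ℝ) ^ (i : ℕ)))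

/-- Whitney's flat norm `|A|^♭ = inf { Mₙ(A - ∂C) + M_{n+1}(C) }`. -/
def flatNorm (n m : ℕ) (A : FormalSum n m) : ℝ :=
  sInf { r | ∃ C : FormalSum (n + 1) m,
    r = massNorm n m (A - boundaryL n m C) + massNorm (n + 1) m C }

/-- Auxiliary recursion (on `fuel`, the integer part of `λ - n`) for the natural norms. -/
def naturalNormAux (m : ℕ) : ℕ → (n : ℕ) → ℝ → FormalSum n m → ℝ
  | 0, n, lam, A => ∑ s ∈ coordPlanes m n, projMass n m lam (coordProj m s) A
  | fuel + 1, n, lam, A =>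
    if lam ≤ n then ∑ s ∈ coordPlanes m n, projMass n m lam (coordProj m s) A
    else ∑ s ∈ coordPlanes m n,
      sInf { r | ∃ C : FormalSum (n + 1) m,
        r = projMass n m n (coordProj m s) (A - boundaryL n m C)
          + naturalNormAux m fuel (n + 1) lam C }

/-- The `λ`-natural norm `|A|^♮_λ` of a simplicial `n`-chain in `ℝ^m`. -/
def naturalNorm (n m : ℕ) (lam : ℝ) (A : FormalSum n m) : ℝ :=
  naturalNormAux m (m - n) n lam A

/-- A sequence of simplicial `n`-chains that is Cauchy in the `λ`-natural norm;
such sequences represent the elements of the completion `X_{n,λ}(ℝ^m)`. -/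
def NatCauchy (n m : ℕ) (lam : ℝ) (A : ℕ → FormalSum n m) : Prop :=
  ∀ ε > 0, ∃ N, ∀ j ≥ N, ∀ k ≥ N, naturalNorm n m lam (A j - A k) < ε

/-- `K` is a `C^s`-(Hölder-)bound for `f`: all derivatives up to order `⌊s⌋` are bounded
by `K` and the top ones are `(s - ⌊s⌋)`-Hölder with constant `K`. -/
def HolderBound {E F : Type} [NormedAddCommGroup E] [NormedSpace ℝ E]
    [NormedAddCommGroup F] [NormedSpace ℝ F] (s : ℝ) (f : E → F) (K : ℝ) : Prop :=
  0 ≤ K ∧ ContDiff ℝ (⌊s⌋₊) f ∧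
    (∀ j ≤ ⌊s⌋₊, ∀ x, ‖iteratedFDeriv ℝ j f x‖ ≤ K) ∧
    (∀ x y, ‖iteratedFDeriv ℝ ⌊s⌋₊ f x - iteratedFDeriv ℝ ⌊s⌋₊ f y‖
      ≤ K * ‖x - y‖ ^ (s - ⌊s⌋₊))

/-- `f` is of class `C^s` (with finite `C^s` norm). -/
def IsCs {E F : Type} [NormedAddCommGroup E] [NormedSpace ℝ E]
    [NormedAddCommGroup F] [NormedSpace ℝ F] (s : ℝ) (f : E → F) : Prop :=
  ∃ K, HolderBound s f K

/-- The `C^s` (Hölder) norm of `f`. -/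
def holderNorm {E F : Type} [NormedAddCommGroup E] [NormedSpace ℝ E]
    [NormedAddCommGroup F] [NormedSpace ℝ F] (s : ℝ) (f : E → F) : ℝ :=
  sInf {K | HolderBound s f K}

/-- The exterior derivative of a differential `n`-form, as a raw `(n+1)`-form. -/
def extDerivRaw {n m : ℕ} (ω : Form n m) : RawForm (n + 1) m :=
  fun x v => ∑ i : Fin (n + 1),
    (-1 : ℝ) ^ (i : ℕ) * fderiv ℝ ω.1 x (v i) (fun j => v (i.succAbove j))


/-- The standard inclusion `ℝ^p ⊆ ℝ^{p'}` (zero-padding the extra coordinates). -/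
def inclPt (p p' : ℕ) (x : Euc p) : Euc p' :=
  WithLp.toLp 2 (fun i : Fin p' => if h : (i : ℕ) < p then x ⟨(i : ℕ), h⟩ else 0)

/-- A simplex in `ℝ^p` viewed in `ℝ^{p'}`. -/
def inclSplx (n p p' : ℕ) (σ : Splx n p) : Splx n p' := fun j => inclPt p p' (σ j)

/-- A simplicial chain in `ℝ^p` viewed in `ℝ^{p'}`. -/
def inclChain (n p p' : ℕ) : FormalSum n p → FormalSum n p' :=
  Finsupp.mapDomain (inclSplx n p p')

/-! ### Auxiliary machinery -/

section Aux

/-- `inclPt` as a linear map (also used for truncation `Euc p' → Euc p`). -/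
def inclLM (q q' : ℕ) : Euc q →ₗ[ℝ] Euc q' where
  toFun := inclPt q q'
  map_add' x y := by
    ext i
    simp only [inclPt, PiLp.add_apply, PiLp.toLp_apply]
    split_ifs <;> simp
  map_smul' c x := by
    ext i
    simp only [inclPt, PiLp.smul_apply, RingHom.id_apply, smul_eq_mul, PiLp.toLp_apply]
    split_ifs <;> simp

@[simp] lemma inclLM_apply (q q' : ℕ) (x : Euc q) : inclLM q q' x = inclPt q q' x := rfl

lemma inclPt_trunc {p p' : ℕ} (h : p ≤ p') (x : Euc p) :
    inclPt p' p (inclPt p p' x) = x := by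
  ext i
  simp only [inclPt, PiLp.toLp_apply]
  rcases i with ⟨i, hi⟩
  rw [dif_pos (lt_of_lt_of_le hi h)]
  rw [dif_pos hi]

/-- Pushforward of formal sums along a linear map of ambient spaces. -/
def postL {k a b : ℕ} (L : Euc a →ₗ[ℝ] Euc b) : FormalSum k a →ₗ[ℝ] FormalSum k b :=
  Finsupp.lmapDomain ℝ ℝ (fun σ j => L (σ j))

lemma postL_apply {k a b : ℕ} (L : Euc a →ₗ[ℝ] Euc b) (A : FormalSum k a) :
    postL L A = Finsupp.mapDomain (fun σ j => L (σ j)) A := rfl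

/-- Pullback of a differential form along a (continuous) linear map. -/
def pbForm {k a b : ℕ} (L : Euc a →L[ℝ] Euc b) (ω : Form k b) : Form k a :=
  ⟨fun x => (ω.1 (L x)).compContinuousLinearMap (fun _ => L), by
    intro x v i j hij hv
    simp only [ContinuousMultilinearMap.compContinuousLinearMap_apply]
    exact ω.2 (L x) _ i j hij (by rw [hv])⟩

lemma pbForm_continuous {k a b : ℕ} (L : Euc a →L[ℝ] Euc b) (ω : Form k b)
    (hω : Continuous ω.1) : Continuous (pbForm L ω).1 := by
  have : (pbForm L ω).1 =
      (ContinuousMultilinearMap.compContinuousLinearMapL (fun _ : Fin k => L)) ∘ ω.1 ∘ L := by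
    funext x
    simp [pbForm, Function.comp]
  rw [this]
  exact (ContinuousMultilinearMap.compContinuousLinearMapL _).continuous.comp
    (hω.comp L.continuous)

lemma simplexIntegral_post {k a b : ℕ} (L : Euc a →L[ℝ] Euc b) (σ : Splx k a) (ω : Form k b) :
    simplexIntegral (fun j => L (σ j)) ω.raw = simplexIntegral σ (pbForm L ω).raw := by
  unfold simplexIntegral
  refine MeasureTheory.integral_congr_ae (Filter.Eventually.of_forall fun t => ?_)
  simp only [Form.raw, pbForm, ContinuousMultilinearMap.compContinuousLinearMap_apply]
  have h1 : L (σ 0 + ∑ i : Fin k, t i • (σ i.succ - σ 0))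
      = L (σ 0) + ∑ i : Fin k, t i • (L (σ i.succ) - L (σ 0)) := by
    rw [map_add, map_sum]
    congr 1
    exact Finset.sum_congr rfl fun i _ => by rw [_root_.map_smul, map_sub]
  have h2 : (fun i : Fin k => L (σ i.succ - σ 0)) = fun i => L (σ i.succ) - L (σ 0) :=
    funext fun i => map_sub _ _ _
  rw [h1, h2]

lemma chainIntegral_post {k a b : ℕ} (L : Euc a →L[ℝ] Euc b) (A : FormalSum k a)
    (ω : Form k b) :
    chainIntegralL k b ω.raw (postL L.toLinearMap A)
      = chainIntegralL k a (pbForm L ω).raw A := by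
  rw [postL_apply]
  unfold chainIntegralL
  rw [Finsupp.linearCombination_mapDomain]
  have : ((fun σ => simplexIntegral σ ω.raw) ∘ fun (σ : Splx k a) j => L.toLinearMap (σ j))
      = fun σ => simplexIntegral σ (pbForm L ω).raw :=
    funext fun σ => simplexIntegral_post L σ ω
  rw [this]

lemma postL_null {k a b : ℕ} (L : Euc a →L[ℝ] Euc b) (A : FormalSum k a)
    (hA : A ∈ nullChains k a) : postL L.toLinearMap A ∈ nullChains k b := by
  simp only [nullChains, Submodule.mem_iInf, LinearMap.mem_ker, Set.mem_setOf_eq] at hA ⊢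
  intro ω hω
  rw [chainIntegral_post]
  exact hA (pbForm L ω) (pbForm_continuous L ω hω)

lemma postL_chainEquiv {k a b : ℕ} (L : Euc a →L[ℝ] Euc b) {A B : FormalSum k a}
    (h : ChainEquiv A B) : ChainEquiv (postL L.toLinearMap A) (postL L.toLinearMap B) := by
  unfold ChainEquiv at h ⊢
  rw [← map_sub]
  exact postL_null L _ h

lemma boundary_post {k a b : ℕ} (L : Euc a →ₗ[ℝ] Euc b) (C : FormalSum (k + 1) a) :
    boundaryL k b (postL L C) = postL L (boundaryL k a C) := by
  have : (boundaryL k b).comp (postL L (k := k + 1))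
      = (postL L (k := k)).comp (boundaryL k a) := by
    apply Finsupp.lhom_ext
    intro σ c
    simp only [LinearMap.comp_apply, postL_apply, Finsupp.mapDomain_single]
    unfold boundaryL
    rw [Finsupp.linearCombination_single, Finsupp.linearCombination_single]
    rw [Finsupp.mapDomain_smul, Finsupp.mapDomain_finset_sum]
    congr 1
    refine Finset.sum_congr rfl fun i _ => ?_
    rw [Finsupp.mapDomain_single]
  exact LinearMap.congr_fun this C

end Aux

section Aux2

lemma simplexVolume_nonneg {k m : ℕ} (σ : Splx k m) : 0 ≤ simplexVolume σ :=
  div_nonneg (Real.sqrt_nonneg _) (by positivity)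

lemma inner_coordProj_sub {m : ℕ} (s : Finset (Fin m)) (x x' y y' : Euc m) :
    (inner ℝ (coordProj m s x - coordProj m s x') (coordProj m s y - coordProj m s y') : ℝ)
      = ∑ i ∈ s, (x i - x' i) * (y i - y' i) := by
  rw [PiLp.inner_apply]
  rw [← Finset.sum_subset (Finset.subset_univ s) (fun i _ hi => ?_)]
  · refine Finset.sum_congr rfl fun i hi => ?_
    simp [PiLp.sub_apply, coordProj, if_pos hi, RCLike.inner_apply, conj_trivial]
    ring
  · simp [PiLp.sub_apply, coordProj, if_neg hi, RCLike.inner_apply]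

/-- Volumes of coordinate projections are unchanged by truncating the ambient space,
for coordinate planes inside the smaller space. -/
lemma vol_trunc {k p p' : ℕ} (h : p ≤ p') (s₀ : Finset (Fin p)) (σ : Splx k p') :
    simplexVolume (coordProj p s₀ ∘ fun j => inclPt p' p (σ j))
      = simplexVolume (coordProj p' (s₀.map (Fin.castLEEmb h)) ∘ σ) := by
  unfold simplexVolume
  refine congrArg (fun d => Real.sqrt d / (Nat.factorial k : ℝ)) (congrArg Matrix.det ?_)
  apply Matrix.ext
  intro i j
  simp only [Matrix.of_apply, Function.comp]
  rw [inner_coordProj_sub, inner_coordProj_sub, Finset.sum_map]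
  refine Finset.sum_congr rfl fun i0 _ => ?_
  have he : ∀ z : Euc p', inclPt p' p z i0 = z (Fin.castLE h i0) := by
    intro z
    simp only [inclPt, PiLp.toLp_apply]
    rw [dif_pos (lt_of_lt_of_le i0.isLt h)]
    rfl
  simp only [he, Fin.castLEEmb_apply]

/-- A simplex included from `ℝ^p` has zero projected volume onto a coordinate
`k`-plane using a coordinate `≥ p`. -/
lemma vol_incl_zero {k p p' : ℕ} (s : Finset (Fin p')) (hcard : s.card = k)
    (i₀ : Fin p') (hi₀ : i₀ ∈ s) (hp : p ≤ (i₀ : ℕ)) (τ : Splx k p) :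
    simplexVolume (coordProj p' s ∘ inclSplx k p p' τ) = 0 := by
  classical
  set σ : Splx k p' := coordProj p' s ∘ inclSplx k p p' τ with hσ
  set v : Fin k → Euc p' := fun a => σ a.succ - σ 0 with hv
  set t : Finset (Fin p') := s.filter (fun i => (i : ℕ) < p) with ht
  have htcard : t.card < k := by
    rw [← hcard]
    refine Finset.card_lt_card ⟨Finset.filter_subset _ _, fun hsub => ?_⟩
    have := hsub hi₀
    rw [ht, Finset.mem_filter] at this
    omega
  have hv0 : ∀ a (i : Fin p'), i ∉ t → v a i = 0 := by
    intro a i hit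
    have : ∀ b : Fin (k + 1), σ b i = 0 := by
      intro b
      simp only [hσ, Function.comp, coordProj, inclSplx, inclPt, PiLp.toLp_apply]
      by_cases hs : i ∈ s
      · rw [if_pos hs]
        have : ¬ ((i : ℕ) < p) := by
          intro hlt
          exact hit (by rw [ht, Finset.mem_filter]; exact ⟨hs, hlt⟩)
        rw [dif_neg this]
      · rw [if_neg hs]
    show (σ a.succ - σ 0) i = 0
    rw [PiLp.sub_apply, this, this, sub_zero]
  -- the `k` vectors `v` are linearly dependent
  have hdep : ¬ LinearIndependent ℝ (fun a : Fin k => (fun i : {i // i ∈ t} => v a i.1)) := by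
    intro hli
    have := hli.fintype_card_le_finrank
    rw [Module.finrank_pi, Fintype.card_fin, Fintype.card_coe] at this
    omega
  obtain ⟨c, hc0, a₀, ha₀⟩ := Fintype.not_linearIndependent_iff.mp hdep
  have hsum : (∑ b, c b • v b) = 0 := by
    ext i
    have happ : (∑ b, c b • v b) i = ∑ b, c b * v b i := by
      induction (Finset.univ : Finset (Fin k)) using Finset.induction with
      | empty => simp
      | insert _ _ hnotmem ih =>
          rw [Finset.sum_insert hnotmem, Finset.sum_insert hnotmem, PiLp.add_apply,
            PiLp.smul_apply, ih, smul_eq_mul]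
    rw [happ]
    by_cases hit : i ∈ t
    · have := congrFun hc0 ⟨i, hit⟩
      rw [Finset.sum_apply] at this
      simpa using this
    · simp [hv0 _ _ hit]
  -- hence the Gram determinant vanishes
  have hdet : (Matrix.of fun i j : Fin k =>
      (inner ℝ (σ i.succ - σ 0) (σ j.succ - σ 0) : ℝ)).det = 0 := by
    rw [← Matrix.exists_mulVec_eq_zero_iff]
    refine ⟨c, fun h => ha₀ (congrFun h a₀), ?_⟩
    funext a
    simp only [Matrix.mulVec, dotProduct, Matrix.of_apply]
    have : ∀ b, (inner ℝ (v a) (v b) : ℝ) * c b = inner ℝ (v a) (c b • v b) := by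
      intro b
      rw [real_inner_smul_right]
      ring
    calc ∑ b, (inner ℝ (σ a.succ - σ 0) (σ b.succ - σ 0) : ℝ) * c b
        = ∑ b, (inner ℝ (v a) (c b • v b) : ℝ) := Finset.sum_congr rfl fun b _ => this b
      _ = (inner ℝ (v a) (∑ b, c b • v b) : ℝ) := (inner_sum _ _ _).symm
      _ = 0 := by rw [hsum, inner_zero_right]
  unfold simplexVolume
  rw [hdet, Real.sqrt_zero, zero_div]

end Aux2

section Aux3

lemma chainEquiv_refl {k m : ℕ} (A : FormalSum k m) : ChainEquiv A A := by
  unfold ChainEquiv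
  rw [sub_self]
  exact zero_mem _

lemma postL_chainEquiv' {k a b : ℕ} (L : Euc a →ₗ[ℝ] Euc b) {A B : FormalSum k a}
    (h : ChainEquiv A B) : ChainEquiv (postL L A) (postL L B) := by
  have := postL_chainEquiv (LinearMap.toContinuousLinearMap L) h
  rwa [LinearMap.coe_toContinuousLinearMap] at this

lemma postL_trunc_incl {k p p' : ℕ} (h : p ≤ p') (A : FormalSum k p) :
    postL (k := k) (inclLM p' p) (postL (inclLM p p') A) = A := by
  rw [postL_apply, postL_apply, ← Finsupp.mapDomain_comp]
  have : ((fun σ j => inclLM p' p (σ j)) ∘ (fun (σ : Splx k p) j => inclLM p p' (σ j))) = id := by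
    funext σ
    funext j
    exact congrFun (congrArg _ rfl) j |>.trans (inclPt_trunc h (σ j))
  rw [this, Finsupp.mapDomain_id]

lemma inclSplx_injective {k p p' : ℕ} (h : p ≤ p') :
    Function.Injective (fun (σ : Splx k p) j => inclLM p p' (σ j)) := by
  intro σ σ' hσ
  funext j
  have := congrFun hσ j
  calc σ j = inclPt p' p (inclPt p p' (σ j)) := (inclPt_trunc h (σ j)).symm
    _ = inclPt p' p (inclPt p p' (σ' j)) := by rw [show inclPt p p' (σ j) = inclPt p p' (σ' j) from this]
    _ = σ' j := inclPt_trunc h (σ' j)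

lemma mapDomain_weight_sum_le {α β : Type*} (f : α → β) (B : α →₀ ℝ) (w : α → ℝ) (w' : β → ℝ)
    (hw' : ∀ b, 0 ≤ w' b) (hcomp : ∀ a, w' (f a) = w a) :
    ∑ τ ∈ (Finsupp.mapDomain f B).support, |(Finsupp.mapDomain f B) τ| * w' τ
      ≤ ∑ σ ∈ B.support, |B σ| * w σ := by
  classical
  have hsub : (Finsupp.mapDomain f B).support ⊆ B.support.image f := Finsupp.mapDomain_support
  rw [Finset.sum_subset hsub (fun τ _ hτ => by
    rw [Finsupp.notMem_support_iff.mp hτ]; simp)]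
  rw [← Finset.sum_fiberwise_of_maps_to (fun σ hσ => Finset.mem_image_of_mem f hσ)
    (fun σ => |B σ| * w σ)]
  refine Finset.sum_le_sum fun τ hτ => ?_
  have happ : Finsupp.mapDomain f B τ = ∑ σ ∈ B.support.filter (fun σ => f σ = τ), B σ := by
    rw [Finsupp.mapDomain, Finsupp.sum_apply, Finsupp.sum, Finset.sum_filter]
    exact Finset.sum_congr rfl fun σ _ => by rw [Finsupp.single_apply]
  calc |Finsupp.mapDomain f B τ| * w' τ
      ≤ (∑ σ ∈ B.support.filter (fun σ => f σ = τ), |B σ|) * w' τ := by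
        refine mul_le_mul_of_nonneg_right ?_ (hw' τ)
        rw [happ]
        exact Finset.abs_sum_le_sum_abs _ _
    _ = ∑ σ ∈ B.support.filter (fun σ => f σ = τ), |B σ| * w' τ := by rw [Finset.sum_mul]
    _ = ∑ σ ∈ B.support.filter (fun σ => f σ = τ), |B σ| * w σ := by
        refine Finset.sum_congr rfl fun σ hσ => ?_
        rw [← hcomp σ, (Finset.mem_filter.mp hσ).2]

lemma mapDomain_weight_sum_inj {α β : Type*} {f : α → β} (hf : Function.Injective f)
    (B : α →₀ ℝ) (w' : β → ℝ) :
    ∑ τ ∈ (Finsupp.mapDomain f B).support, |(Finsupp.mapDomain f B) τ| * w' τ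
      = ∑ σ ∈ B.support, |B σ| * w' (f σ) := by
  classical
  rw [Finsupp.mapDomain_support_of_injective hf]
  rw [Finset.sum_image (fun a _ b _ hab => hf hab)]
  exact Finset.sum_congr rfl fun σ _ => by rw [Finsupp.mapDomain_apply hf]

/-! projMass API -/

lemma projMass_le {k m : ℕ} (e : ℝ) (pr : Euc m → Euc m) {A B : FormalSum k m}
    (hB : ChainEquiv B A) :
    projMass k m e pr A ≤ ∑ σ ∈ B.support, |B σ| * simplexVolume (pr ∘ σ) ^ (e / k) := by
  unfold projMass
  refine csInf_le ⟨0, ?_⟩ ⟨B, hB, rfl⟩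
  rintro r ⟨C, _, rfl⟩
  exact Finset.sum_nonneg fun σ _ =>
    mul_nonneg (abs_nonneg _) (Real.rpow_nonneg (simplexVolume_nonneg _) _)

lemma le_projMass {k m : ℕ} {e : ℝ} {pr : Euc m → Euc m} {A : FormalSum k m} {c : ℝ}
    (hc : ∀ B : FormalSum k m, ChainEquiv B A →
      c ≤ ∑ σ ∈ B.support, |B σ| * simplexVolume (pr ∘ σ) ^ (e / k)) :
    c ≤ projMass k m e pr A := by
  unfold projMass
  refine le_csInf ⟨_, A, chainEquiv_refl A, rfl⟩ ?_
  rintro r ⟨B, hB, rfl⟩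
  exact hc B hB

lemma projMass_nonneg {k m : ℕ} (e : ℝ) (pr : Euc m → Euc m) (A : FormalSum k m) :
    0 ≤ projMass k m e pr A := by
  apply Real.sInf_nonneg
  rintro r ⟨B, _, rfl⟩
  exact Finset.sum_nonneg fun σ _ =>
    mul_nonneg (abs_nonneg _) (Real.rpow_nonneg (simplexVolume_nonneg _) _)

lemma projMass_zero {k m : ℕ} (e : ℝ) (pr : Euc m → Euc m) :
    projMass k m e pr (0 : FormalSum k m) = 0 := by
  refine le_antisymm ?_ (projMass_nonneg e pr 0)
  have := projMass_le e pr (chainEquiv_refl (0 : FormalSum k m))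
  simpa using this

lemma vol_incl {k p p' : ℕ} (h : p ≤ p') (s₀ : Finset (Fin p)) (σ : Splx k p) :
    simplexVolume (coordProj p' (s₀.map (Fin.castLEEmb h)) ∘ fun j => inclPt p p' (σ j))
      = simplexVolume (coordProj p s₀ ∘ σ) := by
  rw [← vol_trunc h s₀]
  have : (fun j => inclPt p' p ((fun j => inclPt p p' (σ j)) j)) = σ := by
    funext j
    exact inclPt_trunc h (σ j)
  rw [this]

lemma projMass_proj_le {k p p' : ℕ} (h : p ≤ p') (e : ℝ) (s₀ : Finset (Fin p))
    (B : FormalSum k p') :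
    projMass k p e (coordProj p s₀) (postL (inclLM p' p) B)
      ≤ projMass k p' e (coordProj p' (s₀.map (Fin.castLEEmb h))) B := by
  refine le_projMass fun B' hB' => ?_
  refine le_trans (projMass_le e _ (postL_chainEquiv' (inclLM p' p) hB')) ?_
  rw [postL_apply]
  refine mapDomain_weight_sum_le _ _ _ _
    (fun τ => Real.rpow_nonneg (simplexVolume_nonneg _) _) (fun σ => ?_)
  have : (coordProj p s₀ ∘ fun j => inclLM p' p (σ j))
      = coordProj p s₀ ∘ fun j => inclPt p' p (σ j) := rfl
  rw [this, vol_trunc h s₀ σ]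

lemma projMass_incl_eq {k p p' : ℕ} (h : p ≤ p') (e : ℝ) (s₀ : Finset (Fin p))
    (A : FormalSum k p) :
    projMass k p' e (coordProj p' (s₀.map (Fin.castLEEmb h))) (postL (inclLM p p') A)
      = projMass k p e (coordProj p s₀) A := by
  refine le_antisymm ?_ ?_
  · refine le_projMass fun B hB => ?_
    refine le_trans (projMass_le e _ (postL_chainEquiv' (inclLM p p') hB)) (le_of_eq ?_)
    rw [postL_apply]
    rw [mapDomain_weight_sum_inj (inclSplx_injective h) B]
    refine Finset.sum_congr rfl fun σ _ => ?_
    have : (coordProj p' (s₀.map (Fin.castLEEmb h)) ∘ fun j => inclLM p p' (σ j))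
        = coordProj p' (s₀.map (Fin.castLEEmb h)) ∘ fun j => inclPt p p' (σ j) := rfl
    rw [this, vol_incl h s₀ σ]
  · have := projMass_proj_le h e s₀ (postL (inclLM p p') A)
    rwa [postL_trunc_incl h] at this

lemma projMass_incl_zero {k p p' : ℕ} (h : p ≤ p') (hk : 0 < k) {e : ℝ} (he : 0 < e)
    {s : Finset (Fin p')} (hcard : s.card = k) {i₀ : Fin p'} (hi₀ : i₀ ∈ s)
    (hp : p ≤ (i₀ : ℕ)) (A : FormalSum k p) :
    projMass k p' e (coordProj p' s) (postL (inclLM p p') A) = 0 := by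
  refine le_antisymm ?_ (projMass_nonneg _ _ _)
  refine le_trans (projMass_le e _ (chainEquiv_refl _)) (le_of_eq ?_)
  rw [postL_apply]
  refine Finset.sum_eq_zero fun τ' hτ' => ?_
  classical
  obtain ⟨τ, _, rfl⟩ := Finset.mem_image.mp (Finsupp.mapDomain_support hτ')
  have hvol : simplexVolume (coordProj p' s ∘ fun j => inclLM p p' (τ j)) = 0 :=
    vol_incl_zero s hcard i₀ hi₀ hp τ
  rw [hvol, Real.zero_rpow (by positivity), mul_zero]

end Aux3

section Aux4

lemma aux_succ_def (m fuel k : ℕ) (lam : ℝ) (A : FormalSum k m) :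
    naturalNormAux m (fuel + 1) k lam A =
    if lam ≤ k then ∑ s ∈ coordPlanes m k, projMass k m lam (coordProj m s) A
    else ∑ s ∈ coordPlanes m k,
      sInf { r | ∃ C : FormalSum (k + 1) m,
        r = projMass k m k (coordProj m s) (A - boundaryL k m C)
          + naturalNormAux m fuel (k + 1) lam C } := rfl

lemma aux_zero_def (m k : ℕ) (lam : ℝ) (A : FormalSum k m) :
    naturalNormAux m 0 k lam A
      = ∑ s ∈ coordPlanes m k, projMass k m lam (coordProj m s) A := rfl

lemma aux_nonneg (m fuel k : ℕ) (lam : ℝ) (A : FormalSum k m) :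
    0 ≤ naturalNormAux m fuel k lam A := by
  induction fuel generalizing k A with
  | zero => exact Finset.sum_nonneg fun s _ => projMass_nonneg _ _ _
  | succ fuel ih =>
    rw [aux_succ_def]
    split
    · exact Finset.sum_nonneg fun s _ => projMass_nonneg _ _ _
    · refine Finset.sum_nonneg fun s _ => Real.sInf_nonneg ?_
      rintro r ⟨C, rfl⟩
      exact add_nonneg (projMass_nonneg _ _ _) (ih _ _)

lemma aux_bddBelow (m fuel k : ℕ) (lam : ℝ) (s : Finset (Fin m)) (A : FormalSum k m) :
    BddBelow { r | ∃ C : FormalSum (k + 1) m,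
      r = projMass k m k (coordProj m s) (A - boundaryL k m C)
        + naturalNormAux m fuel (k + 1) lam C } := by
  refine ⟨0, ?_⟩
  rintro r ⟨C, rfl⟩
  exact add_nonneg (projMass_nonneg _ _ _) (aux_nonneg _ _ _ _ _)

lemma aux_of_zero (m fuel k : ℕ) (lam : ℝ) :
    naturalNormAux m fuel k lam (0 : FormalSum k m) = 0 := by
  induction fuel generalizing k with
  | zero =>
    rw [aux_zero_def]
    exact Finset.sum_eq_zero fun s _ => projMass_zero _ _
  | succ fuel ih =>
    rw [aux_succ_def]
    split
    · exact Finset.sum_eq_zero fun s _ => projMass_zero _ _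
    · refine Finset.sum_eq_zero fun s _ => le_antisymm ?_ (Real.sInf_nonneg ?_)
      · refine csInf_le (aux_bddBelow m fuel k lam s 0) ⟨0, ?_⟩
        rw [map_zero, sub_zero, projMass_zero, ih, add_zero]
      · rintro r ⟨C, rfl⟩
        exact add_nonneg (projMass_nonneg _ _ _) (aux_nonneg _ _ _ _ _)

end Aux4

section Aux5

lemma planes_map_mem {p p' k : ℕ} (h : p ≤ p') {s₀ : Finset (Fin p)}
    (hs₀ : s₀ ∈ coordPlanes p k) : s₀.map (Fin.castLEEmb h) ∈ coordPlanes p' k := by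
  rw [coordPlanes, Finset.mem_filter] at hs₀ ⊢
  exact ⟨Finset.mem_univ _, by rw [Finset.card_map]; exact hs₀.2⟩

lemma planes_map_inj {p p' k : ℕ} (h : p ≤ p') :
    ∀ s₀ ∈ coordPlanes p k, ∀ s₁ ∈ coordPlanes p k,
      s₀.map (Fin.castLEEmb h) = s₁.map (Fin.castLEEmb h) → s₀ = s₁ :=
  fun _ _ _ _ hmap => Finset.map_injective _ hmap

lemma sum_coordPlanes {p p' k : ℕ} (h : p ≤ p') (F : Finset (Fin p') → ℝ)
    (h0 : ∀ s ∈ coordPlanes p' k, (∃ i ∈ s, p ≤ (i : ℕ)) → F s = 0) :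
    ∑ s ∈ coordPlanes p' k, F s
      = ∑ s₀ ∈ coordPlanes p k, F (s₀.map (Fin.castLEEmb h)) := by
  classical
  rw [← Finset.sum_image (g := fun s₀ : Finset (Fin p) => s₀.map (Fin.castLEEmb h)) (f := F) (planes_map_inj h)]
  refine (Finset.sum_subset ?_ ?_).symm
  · intro s hs
    obtain ⟨s₀, hs₀, rfl⟩ := Finset.mem_image.mp hs
    exact planes_map_mem h hs₀
  · intro s hs hnot
    refine h0 s hs ?_
    by_contra hno
    push_neg at hno
    refine hnot ?_
    set s₀ : Finset (Fin p) := s.preimage (Fin.castLE h) ((Fin.castLE_injective h).injOn)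
      with hs₀def
    have hmap : s₀.map (Fin.castLEEmb h) = s := by
      ext i
      simp only [Finset.mem_map, hs₀def, Finset.mem_preimage, Fin.castLEEmb_apply]
      constructor
      · rintro ⟨i0, hi0, rfl⟩
        exact hi0
      · intro hi
        exact ⟨⟨(i : ℕ), hno i hi⟩, by simpa using hi, by ext; rfl⟩
    refine Finset.mem_image.mpr ⟨s₀, ?_, hmap⟩
    rw [coordPlanes, Finset.mem_filter]
    refine ⟨Finset.mem_univ _, ?_⟩
    have := Finset.card_map (Fin.castLEEmb h) (s := s₀)
    rw [hmap] at this
    rw [← this]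
    rw [coordPlanes, Finset.mem_filter] at hs
    exact hs.2

lemma aux_fuel_succ (m : ℕ) {lam : ℝ} :
    ∀ fuel k, ∀ A : FormalSum k m, lam ≤ (k : ℝ) + (fuel : ℕ) →
      naturalNormAux m (fuel + 1) k lam A = naturalNormAux m fuel k lam A := by
  intro fuel
  induction fuel with
  | zero =>
    intro k A hle
    rw [aux_succ_def, aux_zero_def, if_pos (by simpa using hle)]
  | succ fuel ih =>
    intro k A hle
    rw [aux_succ_def (fuel := fuel + 1), aux_succ_def (fuel := fuel)]
    by_cases hg : lam ≤ (k : ℝ)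
    · rw [if_pos hg, if_pos hg]
    · rw [if_neg hg, if_neg hg]
      refine Finset.sum_congr rfl fun s _ => ?_
      apply congrArg sInf
      apply Set.ext
      intro r
      constructor
      · rintro ⟨C, rfl⟩
        exact ⟨C, by rw [ih (k + 1) C (by push_cast at hle ⊢; linarith)]⟩
      · rintro ⟨C, rfl⟩
        exact ⟨C, by rw [ih (k + 1) C (by push_cast at hle ⊢; linarith)]⟩

lemma aux_fuel_eq (m : ℕ) {lam : ℝ} (f₁ f₂ k : ℕ) (A : FormalSum k m)
    (h₁ : lam ≤ (k : ℝ) + (f₁ : ℕ)) (h₂ : lam ≤ (k : ℝ) + (f₂ : ℕ)) :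
    naturalNormAux m f₁ k lam A = naturalNormAux m f₂ k lam A := by
  have key : ∀ d f, ∀ A : FormalSum k m, lam ≤ (k : ℝ) + (f : ℕ) →
      naturalNormAux m (f + d) k lam A = naturalNormAux m f k lam A := by
    intro d
    induction d with
    | zero => intro f A _; rfl
    | succ d ih =>
      intro f A hf
      have : f + (d + 1) = (f + d) + 1 := by omega
      rw [this, aux_fuel_succ m (f + d) k A (by push_cast at hf ⊢; linarith), ih f A hf]
  rcases Nat.le_total f₁ f₂ with hle | hle
  · obtain ⟨d, rfl⟩ := Nat.exists_eq_add_of_le hle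
    rw [key d f₁ A h₁]
  · obtain ⟨d, rfl⟩ := Nat.exists_eq_add_of_le hle
    rw [key d f₂ A h₂]

end Aux5

section Aux6

lemma sum_projMass_trunc_le {p p' k : ℕ} (h : p ≤ p') (e : ℝ) (B : FormalSum k p') :
    ∑ s₀ ∈ coordPlanes p k, projMass k p e (coordProj p s₀) (postL (inclLM p' p) B)
      ≤ ∑ s ∈ coordPlanes p' k, projMass k p' e (coordProj p' s) B := by
  classical
  calc ∑ s₀ ∈ coordPlanes p k, projMass k p e (coordProj p s₀) (postL (inclLM p' p) B)
      ≤ ∑ s₀ ∈ coordPlanes p k,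
          projMass k p' e (coordProj p' (s₀.map (Fin.castLEEmb h))) B :=
        Finset.sum_le_sum fun s₀ _ => projMass_proj_le h e s₀ B
    _ = ∑ s ∈ (coordPlanes p k).image (fun s₀ => s₀.map (Fin.castLEEmb h)),
          projMass k p' e (coordProj p' s) B :=
        (Finset.sum_image (g := fun s₀ : Finset (Fin p) => s₀.map (Fin.castLEEmb h))
          (f := fun s => projMass k p' e (coordProj p' s) B) (planes_map_inj h)).symm
    _ ≤ ∑ s ∈ coordPlanes p' k, projMass k p' e (coordProj p' s) B := by
        refine Finset.sum_le_sum_of_subset_of_nonneg ?_ fun s _ _ => projMass_nonneg _ _ _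
        intro s hs
        obtain ⟨s₀, hs₀, rfl⟩ := Finset.mem_image.mp hs
        exact planes_map_mem h hs₀

lemma aux_trunc_le {p p' : ℕ} (h : p ≤ p') {lam : ℝ} :
    ∀ fuel k, ∀ B : FormalSum k p',
      naturalNormAux p fuel k lam (postL (inclLM p' p) B)
        ≤ naturalNormAux p' fuel k lam B := by
  intro fuel
  induction fuel with
  | zero =>
    intro k B
    rw [aux_zero_def, aux_zero_def]
    exact sum_projMass_trunc_le h lam B
  | succ fuel ih =>
    intro k B
    rw [aux_succ_def, aux_succ_def]
    by_cases hg : lam ≤ (k : ℝ)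
    · rw [if_pos hg, if_pos hg]
      exact sum_projMass_trunc_le h lam B
    · rw [if_neg hg, if_neg hg]
      classical
      have hstep : ∀ s₀ ∈ coordPlanes p k,
          sInf { r | ∃ C : FormalSum (k + 1) p,
            r = projMass k p k (coordProj p s₀)
                (postL (inclLM p' p) B - boundaryL k p C)
              + naturalNormAux p fuel (k + 1) lam C }
          ≤ sInf { r | ∃ C : FormalSum (k + 1) p',
            r = projMass k p' k (coordProj p' (s₀.map (Fin.castLEEmb h)))
                (B - boundaryL k p' C)
              + naturalNormAux p' fuel (k + 1) lam C } := by
        intro s₀ _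
        refine le_csInf ⟨_, 0, rfl⟩ ?_
        rintro r ⟨C', rfl⟩
        refine le_trans
          (csInf_le (aux_bddBelow p fuel k lam s₀ _) ⟨postL (inclLM p' p) C', rfl⟩) ?_
        refine add_le_add ?_ (ih (k + 1) C')
        have harg : postL (inclLM p' p) B - boundaryL k p (postL (inclLM p' p) C')
            = postL (inclLM p' p) (B - boundaryL k p' C') := by
          rw [boundary_post, map_sub]
        rw [harg]
        exact projMass_proj_le h (k : ℝ) s₀ _
      calc ∑ s₀ ∈ coordPlanes p k, _ ≤ ∑ s₀ ∈ coordPlanes p k,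
            sInf { r | ∃ C : FormalSum (k + 1) p',
              r = projMass k p' k (coordProj p' (s₀.map (Fin.castLEEmb h)))
                  (B - boundaryL k p' C)
                + naturalNormAux p' fuel (k + 1) lam C } :=
          Finset.sum_le_sum hstep
        _ = ∑ s ∈ (coordPlanes p k).image (fun s₀ => s₀.map (Fin.castLEEmb h)),
            sInf { r | ∃ C : FormalSum (k + 1) p',
              r = projMass k p' k (coordProj p' s) (B - boundaryL k p' C)
                + naturalNormAux p' fuel (k + 1) lam C } :=
          (Finset.sum_image (g := fun s₀ : Finset (Fin p) => s₀.map (Fin.castLEEmb h))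
            (f := fun s => sInf { r | ∃ C : FormalSum (k + 1) p',
              r = projMass k p' k (coordProj p' s) (B - boundaryL k p' C)
                + naturalNormAux p' fuel (k + 1) lam C }) (planes_map_inj h)).symm
        _ ≤ _ := by
          refine Finset.sum_le_sum_of_subset_of_nonneg ?_ fun s _ _ => Real.sInf_nonneg ?_
          · intro s hs
            obtain ⟨s₀, hs₀, rfl⟩ := Finset.mem_image.mp hs
            exact planes_map_mem h hs₀
          · rintro r ⟨C, rfl⟩
            exact add_nonneg (projMass_nonneg _ _ _) (aux_nonneg _ _ _ _ _)

lemma aux_incl_eq {p p' : ℕ} (h : p ≤ p') {lam : ℝ} (hlam : 0 < lam) :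
    ∀ fuel k, 0 < k → ∀ A : FormalSum k p,
      naturalNormAux p' fuel k lam (postL (inclLM p p') A)
        = naturalNormAux p fuel k lam A := by
  intro fuel
  induction fuel with
  | zero =>
    intro k hk A
    rw [aux_zero_def, aux_zero_def]
    rw [sum_coordPlanes h _ (fun s hs ⟨i₀, hi₀, hp⟩ => by
      rw [coordPlanes, Finset.mem_filter] at hs
      exact projMass_incl_zero h hk hlam hs.2 hi₀ hp A)]
    exact Finset.sum_congr rfl fun s₀ _ => projMass_incl_eq h lam s₀ A
  | succ fuel ih =>
    intro k hk A
    rw [aux_succ_def, aux_succ_def]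
    by_cases hg : lam ≤ (k : ℝ)
    · rw [if_pos hg, if_pos hg]
      rw [sum_coordPlanes h _ (fun s hs ⟨i₀, hi₀, hp⟩ => by
        rw [coordPlanes, Finset.mem_filter] at hs
        exact projMass_incl_zero h hk hlam hs.2 hi₀ hp A)]
      exact Finset.sum_congr rfl fun s₀ _ => projMass_incl_eq h lam s₀ A
    · rw [if_neg hg, if_neg hg]
      have hkpos : (0 : ℝ) < (k : ℝ) := by exact_mod_cast hk
      rw [sum_coordPlanes h _ (fun s hs ⟨i₀, hi₀, hp⟩ => by
        rw [coordPlanes, Finset.mem_filter] at hs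
        refine le_antisymm ?_ (Real.sInf_nonneg ?_)
        · refine csInf_le (aux_bddBelow p' fuel k lam s _) ⟨0, ?_⟩
          rw [map_zero, sub_zero, aux_of_zero, add_zero,
            projMass_incl_zero h hk hkpos hs.2 hi₀ hp A]
        · rintro r ⟨C, rfl⟩
          exact add_nonneg (projMass_nonneg _ _ _) (aux_nonneg _ _ _ _ _))]
      refine Finset.sum_congr rfl fun s₀ _ => le_antisymm ?_ ?_
      · refine le_csInf ⟨_, 0, rfl⟩ ?_
        rintro r ⟨C, rfl⟩
        refine csInf_le (aux_bddBelow p' fuel k lam _ _) ⟨postL (inclLM p p') C, ?_⟩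
        have harg : postL (inclLM p p') A - boundaryL k p' (postL (inclLM p p') C)
            = postL (inclLM p p') (A - boundaryL k p C) := by
          rw [boundary_post, map_sub]
        rw [harg, projMass_incl_eq h (k : ℝ) s₀, ih (k + 1) (Nat.succ_pos k) C]
      · refine le_csInf ⟨_, 0, rfl⟩ ?_
        rintro r ⟨C', rfl⟩
        refine le_trans
          (csInf_le (aux_bddBelow p fuel k lam s₀ _) ⟨postL (inclLM p' p) C', rfl⟩) ?_
        refine add_le_add ?_ (aux_trunc_le h fuel (k + 1) C')
        have harg : A - boundaryL k p (postL (inclLM p' p) C')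
            = postL (inclLM p' p) (postL (inclLM p p') A - boundaryL k p' C') := by
          rw [map_sub, boundary_post, postL_trunc_incl h]
        rw [harg]
        exact projMass_proj_le h (k : ℝ) s₀ _

end Aux6

/-- The `λ`-natural norm is independent of the ambient dimension: for
integers `0 < n ≤ p ≤ p'` and real `n ≤ λ ≤ p`, the `λ`-natural norm of a simplicial
`n`-chain `A` in `ℝ^p` equals the `λ`-natural norm of `A` viewed, via the standard
inclusion `ℝ^p ⊆ ℝ^{p'}`, as a chain in `ℝ^{p'}`. -/
theorem naturalNorm_ambient_independent (n p p' : ℕ) (hn : 0 < n) (h1 : n ≤ p) (h2 : p ≤ p')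
    (lam : ℝ) (hl1 : (n : ℝ) ≤ lam) (hl2 : lam ≤ (p : ℝ)) (A : FormalSum n p) :
    naturalNorm n p lam A = naturalNorm n p' lam (inclChain n p p' A) := by
  have hlam : 0 < lam := lt_of_lt_of_le (by exact_mod_cast hn) hl1
  have hincl : inclChain n p p' A = postL (inclLM p p') A := rfl
  unfold naturalNorm
  have hc1 : lam ≤ (n : ℝ) + ((p - n : ℕ) : ℝ) := by
    rw [Nat.cast_sub h1]; linarith
  have hc2 : lam ≤ (n : ℝ) + ((p' - n : ℕ) : ℝ) := by
    have hp' : (p : ℝ) ≤ (p' : ℝ) := by exact_mod_cast h2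
    rw [Nat.cast_sub (le_trans h1 h2)]; linarith
  rw [aux_fuel_eq p (p - n) (p' - n) n A hc1 hc2]
  rw [hincl, aux_incl_eq h2 hlam (p' - n) n hn A]

end
end

section
/- (Compatibility with the Lebesgue integral for infinite chains of finite mass) Let n ≥ 1 and let Σ_{i=1}^∞ aᵢσᵢ be a formal infinite sum of oriented n-simplices in ℝ^n with real coefficients such that Σ|aᵢ|M_n(σᵢ) < ∞. Then the partial sums A_k = Σ_{i=1}^k aᵢσᵢ form a Cauchy sequence in the n-natural norm, converging to some A ∈ X_{n,n}(ℝ^n); and for every bounded continuous n-form ω = g dx₁∧⋯∧dxₙ on ℝ^n, the extended integral satisfies L_ω·A = ∫_{ℝ^n} A(x) g(x) dm_n(x), where A(x) = Σᵢ ±aᵢ (the sum over those i with x in the interior of σᵢ, signed according to whether the orientation of σᵢ agrees with the standard orientation of ℝ^n) is the coefficient function of the infinite chain, which is defined almost everywhere and integrable. -/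
open MeasureTheory Filter Metric Set

noncomputable section

/-- The sign of the orientation of a nondegenerate `n`-simplex in `ℝ^n` relative to the
standard orientation of `ℝ^n`. -/
def orientSign {n : ℕ} (σ : Splx n n) : ℝ :=
  Real.sign (Matrix.det (Matrix.of fun i j : Fin n => (σ j.succ - σ 0) i))

/-- The coefficient function `x ↦ Σᵢ ± aᵢ` of an infinite chain `Σ aᵢσᵢ` in `ℝ^n` (summing
over the simplices whose interior contains `x`, with sign according to orientation). -/
def coeffFun {n : ℕ} (a : ℕ → ℝ) (σ : ℕ → Splx n n) : Euc n → ℝ :=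
  fun x => ∑' i : ℕ,
    Set.indicator (interior (convexHull ℝ (Set.range (σ i))))
      (fun _ => orientSign (σ i) * a i) x

open Matrix in
lemma simplexVolume_eq_abs_det' {n : ℕ} (τ : Splx n n) :
    simplexVolume τ = |Matrix.det (Matrix.of fun i j : Fin n => (τ j.succ - τ 0) i)| / (Nat.factorial n : ℝ) := by
  have h : (Matrix.of fun i j : Fin n =>
        (inner ℝ (τ i.succ - τ 0) (τ j.succ - τ 0) : ℝ)) =
      Matrix.transpose (Matrix.of fun i j : Fin n => (τ j.succ - τ 0) i) *
        (Matrix.of fun i j : Fin n => (τ j.succ - τ 0) i) := by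
    ext i j
    simp [Matrix.mul_apply, PiLp.inner_apply, RCLike.inner_apply, conj_trivial,
      Matrix.transpose_apply, mul_comm]
  rw [simplexVolume, h, Matrix.det_mul, Matrix.det_transpose, ← sq, Real.sqrt_sq_eq_abs]
section T2
variable {n : ℕ}

def stdEuc' (n : ℕ) : Set (Euc n) :=
  (MeasurableEquiv.toLp 2 (Fin n → ℝ)).symm ⁻¹' stdSimplexSet n

lemma mem_stdEuc' {x : Euc n} : x ∈ stdEuc' n ↔ (∀ i, 0 ≤ x i) ∧ ∑ i, x i ≤ 1 := Iff.rfl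

lemma stdSimplexSet_isCompact : IsCompact (stdSimplexSet n) := by
  have hcl : IsClosed (stdSimplexSet n) := by
    have : stdSimplexSet n =
        (⋂ i, {t : Fin n → ℝ | 0 ≤ t i}) ∩ {t : Fin n → ℝ | ∑ i, t i ≤ 1} := by
      ext t; simp [stdSimplexSet]
    rw [this]
    exact IsClosed.inter
      (isClosed_iInter fun i => isClosed_le continuous_const (continuous_apply i))
      (isClosed_le (by continuity) continuous_const)
  have hb : Bornology.IsBounded (stdSimplexSet n) := by
    refine Bornology.IsBounded.subset
      (isCompact_univ_pi fun _ : Fin n => isCompact_Icc (a := (0:ℝ)) (b := 1)).isBounded ?_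
    intro t ht
    refine Set.mem_univ_pi.2 fun i => ⟨ht.1 i, ?_⟩
    calc t i ≤ ∑ j, t j := Finset.single_le_sum (fun j _ => ht.1 j) (Finset.mem_univ i)
      _ ≤ 1 := ht.2
  exact Metric.isCompact_of_isClosed_isBounded hcl hb

lemma stdEuc'_isCompact : IsCompact (stdEuc' n) := by
  have : stdEuc' n = (WithLp.equiv 2 (Fin n → ℝ)).symm '' stdSimplexSet n := by
    rw [Equiv.image_eq_preimage_symm, Equiv.symm_symm]
    rfl
  rw [this]
  exact stdSimplexSet_isCompact.image (PiLp.continuous_toLp 2 fun _ => ℝ)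

lemma stdEuc'_convex : Convex ℝ (stdEuc' n) := by
  intro x hx y hy α β hα hβ hαβ
  rw [mem_stdEuc'] at hx hy ⊢
  have hc : ∀ i, (α • x + β • y) i = α * x i + β * y i := by
    intro i; simp [PiLp.add_apply, PiLp.smul_apply, smul_eq_mul]
  constructor
  · intro i; rw [hc i]; exact add_nonneg (mul_nonneg hα (hx.1 i)) (mul_nonneg hβ (hy.1 i))
  · calc ∑ i, (α • x + β • y) i = α * ∑ i, x i + β * ∑ i, y i := by
          simp only [hc]; rw [Finset.sum_add_distrib, Finset.mul_sum, Finset.mul_sum]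
    _ ≤ α * 1 + β * 1 := by
          gcongr
          · exact hx.2
          · exact hy.2
    _ = 1 := by rw [mul_one, mul_one, hαβ]

def lmap' (τ : Splx n n) : Euc n →ₗ[ℝ] Euc n :=
  (EuclideanSpace.basisFun (Fin n) ℝ).toBasis.constr ℝ (fun i => τ i.succ - τ 0)

lemma lmap'_apply (τ : Splx n n) (x : Euc n) :
    lmap' τ x = ∑ i, x i • (τ i.succ - τ 0) := by
  simp only [lmap', Module.Basis.constr_apply_fintype, Module.Basis.equivFun_apply]
  rfl

lemma lmap'_det (τ : Splx n n) :
    LinearMap.det (lmap' τ) =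
      Matrix.det (Matrix.of fun i j : Fin n => (τ j.succ - τ 0) i) := by
  rw [← LinearMap.det_toMatrix (EuclideanSpace.basisFun (Fin n) ℝ).toBasis (lmap' τ)]
  congr 1
  ext i j
  rw [LinearMap.toMatrix_apply]
  rw [show ((EuclideanSpace.basisFun (Fin n) ℝ).toBasis j) = _ from rfl]
  rw [lmap', Module.Basis.constr_basis]
  simp [OrthonormalBasis.coe_toBasis_repr_apply, EuclideanSpace.basisFun_repr]

end T2
lemma stdEuc'_measurableSet {n : ℕ} : MeasurableSet (stdEuc' n) :=
  stdEuc'_isCompact.isClosed.measurableSet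
section T3
variable {n : ℕ}

lemma image_eq_hull' (τ : Splx n n) :
    (fun x => τ 0 + lmap' τ x) '' stdEuc' n = convexHull ℝ (Set.range τ) := by
  apply Set.Subset.antisymm
  · rintro _ ⟨x, hx, rfl⟩
    rw [mem_stdEuc'] at hx
    have key : τ 0 + lmap' τ x =
        ∑ j : Fin (n+1),
          (Fin.cons (1 - ∑ i, x i) (fun i => x i) : Fin (n+1) → ℝ) j • τ j := by
      rw [lmap'_apply, Fin.sum_univ_succ]
      simp only [Fin.cons_zero, Fin.cons_succ]
      rw [sub_smul, one_smul]
      simp only [smul_sub]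
      rw [Finset.sum_sub_distrib, ← Finset.sum_smul]
      abel
    simp only []
    rw [key]
    refine (convex_convexHull ℝ (Set.range τ)).sum_mem (fun j _ => ?_) ?_
      (fun j _ => subset_convexHull ℝ _ (Set.mem_range_self j))
    · refine Fin.cases ?_ ?_ j
      · simpa using sub_nonneg.2 hx.2
      · intro i; simpa using hx.1 i
    · rw [Fin.sum_univ_succ]; simp
  · refine convexHull_min ?_ ?_
    · rintro _ ⟨j, rfl⟩
      refine Fin.cases ?_ ?_ j
      · refine ⟨0, ?_, by simp⟩
        rw [mem_stdEuc']
        refine ⟨fun i => ?_, ?_⟩ <;> simp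
      · intro i
        refine ⟨EuclideanSpace.single i 1, ?_, ?_⟩
        · rw [mem_stdEuc']
          constructor
          · intro k
            rw [EuclideanSpace.single_apply]
            split <;> norm_num
          · simp [EuclideanSpace.single_apply]
        · show τ 0 + lmap' τ (EuclideanSpace.single i 1) = τ i.succ
          rw [lmap'_apply]
          simp only [EuclideanSpace.single_apply, ite_smul, one_smul, zero_smul]
          rw [Finset.sum_ite_eq' Finset.univ i (fun k => τ k.succ - τ 0)]
          simp
    · have himg : (fun x => τ 0 + lmap' τ x) '' stdEuc' n =
          (fun y => τ 0 + y) '' (lmap' τ '' stdEuc' n) := by rw [Set.image_image]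
      rw [himg]
      exact (stdEuc'_convex.linear_image (lmap' τ)).translate (τ 0)

end T3
section T4
variable {n : ℕ}

lemma volume_hull' (τ : Splx n n) :
    volume (convexHull ℝ (Set.range τ)) =
      ENNReal.ofReal |Matrix.det (Matrix.of fun i j : Fin n => (τ j.succ - τ 0) i)| *
        volume (stdEuc' n) := by
  rw [← image_eq_hull',
    show ((fun x => τ 0 + lmap' τ x) '' stdEuc' n) =
      (fun y => τ 0 + y) '' (lmap' τ '' stdEuc' n) from (Set.image_image _ _ _).symm,
    Set.image_add_left, measure_preimage_add,
    MeasureTheory.Measure.addHaar_image_linearMap volume, lmap'_det]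

lemma interior_hull_ae (τ : Splx n n) :
    interior (convexHull ℝ (Set.range τ)) =ᵐ[volume] convexHull ℝ (Set.range τ) := by
  rw [MeasureTheory.ae_eq_set]
  constructor
  · rw [Set.diff_eq_empty.2 interior_subset]; exact measure_empty
  · have hcl : IsClosed (convexHull ℝ (Set.range τ)) :=
      ((Set.finite_range τ).isCompact_convexHull ℝ).isClosed
    rw [← hcl.frontier_eq]
    exact (convex_convexHull ℝ _).addHaar_frontier volume

lemma sign_mul_abs' (d : ℝ) : Real.sign d * |d| = d := by
  rcases lt_trichotomy d 0 with h | h | h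
  · rw [Real.sign_of_neg h, abs_of_neg h]; ring
  · simp [h]
  · rw [Real.sign_of_pos h, abs_of_pos h]; ring

lemma key_integral' (τ : Splx n n) (g : Euc n → ℝ) :
    simplexIntegral τ (fun x v => g x * Matrix.det (Matrix.of fun i j => v j i)) =
      orientSign τ * ∫ x in interior (convexHull ℝ (Set.range τ)), g x := by
  set D : ℝ := Matrix.det (Matrix.of fun i j : Fin n => (τ j.succ - τ 0) i) with hDdef
  have horient : orientSign τ = Real.sign D := rfl
  have step1 : simplexIntegral τ
        (fun x v => g x * Matrix.det (Matrix.of fun i j => v j i)) =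
      ∫ x in stdEuc' n, g (τ 0 + lmap' τ x) * D := by
    rw [simplexIntegral]
    rw [← (EuclideanSpace.volume_preserving_symm_measurableEquiv_toLp (Fin n)).setIntegral_preimage_emb
      (MeasurableEquiv.toLp 2 (Fin n → ℝ)).symm.measurableEmbedding
      (fun t => g (τ 0 + ∑ i : Fin n, t i • (τ i.succ - τ 0)) * D) (stdSimplexSet n)]
    refine MeasureTheory.integral_congr_ae (Filter.Eventually.of_forall fun x => ?_)
    show g (τ 0 + ∑ i : Fin n, (MeasurableEquiv.toLp 2 (Fin n → ℝ)).symm x i • (τ i.succ - τ 0)) * D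
      = g (τ 0 + lmap' τ x) * D
    rw [lmap'_apply]
    rfl
  rw [step1, MeasureTheory.integral_mul_const,
    MeasureTheory.setIntegral_congr_set (interior_hull_ae τ), horient]
  by_cases hD0 : D = 0
  · rw [hD0]; simp
  · have hLdet : LinearMap.det (lmap' τ) = D := lmap'_det τ
    have hLinj : Function.Injective (lmap' τ) := by
      have hd : LinearMap.det (lmap' τ) ≠ 0 := by rw [hLdet]; exact hD0
      have h2 := (LinearMap.equivOfDetNeZero (lmap' τ) hd).injective
      exact fun x y hxy => h2 hxy
    have hinj : Set.InjOn (fun x => τ 0 + lmap' τ x) (stdEuc' n) := by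
      intro x _ y _ h
      exact hLinj (add_left_cancel h)
    have hT' : ∀ x ∈ stdEuc' n, HasFDerivWithinAt (fun x => τ 0 + lmap' τ x)
        (LinearMap.toContinuousLinearMap (lmap' τ)) (stdEuc' n) x := fun x _ =>
      (((lmap' τ).toContinuousLinearMap.hasFDerivAt).const_add (τ 0)).hasFDerivWithinAt
    have cov := MeasureTheory.integral_image_eq_integral_abs_det_fderiv_smul volume
      stdEuc'_measurableSet hT' hinj g
    rw [image_eq_hull' τ] at cov
    have hcdet : ContinuousLinearMap.det (LinearMap.toContinuousLinearMap (lmap' τ)) = D := by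
      rw [ContinuousLinearMap.det, LinearMap.coe_toContinuousLinearMap]
      exact hLdet
    rw [cov]
    simp only [hcdet, smul_eq_mul]
    rw [MeasureTheory.integral_const_mul, ← mul_assoc, sign_mul_abs', mul_comm]
end T4
section T5
open MeasureTheory ENNReal NNReal

lemma integrable_tsum_of_norm' {α : Type} [MeasurableSpace α] {μ : Measure α}
    {F : ℕ → α → ℝ} (h_int : ∀ i, Integrable (F i) μ)
    (h_sum : Summable fun i => ∫ a, ‖F i a‖ ∂μ) :
    Integrable (fun a => ∑' i, F i a) μ := by
  have hnn : ∀ i, 0 ≤ ∫ a, ‖F i a‖ ∂μ := fun i => integral_nonneg fun a => norm_nonneg _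
  have htop : ∑' i, ∫⁻ a, ‖F i a‖₊ ∂μ ≠ ⊤ := by
    have h1 : ∀ i, ∫⁻ a, ‖F i a‖₊ ∂μ = ENNReal.ofReal (∫ a, ‖F i a‖ ∂μ) := fun i =>
      (MeasureTheory.ofReal_integral_norm_eq_lintegral_enorm (h_int i)).symm
    rw [funext h1, ← ENNReal.ofReal_tsum_of_nonneg hnn h_sum]
    exact ENNReal.ofReal_ne_top
  have hG : ∫⁻ a, ∑' i, (‖F i a‖₊ : ℝ≥0∞) ∂μ ≠ ⊤ := by
    rw [lintegral_tsum (f := fun i a => (‖F i a‖₊ : ℝ≥0∞)) fun i => (h_int i).aestronglyMeasurable.enorm]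
    exact htop
  have hae : ∀ᵐ a ∂μ, Summable fun i => ‖F i a‖ := by
    have h1 := ae_lt_top' (AEMeasurable.ennreal_tsum fun i =>
      (h_int i).aestronglyMeasurable.enorm) hG
    filter_upwards [h1] with a ha
    have h2 := ENNReal.tsum_coe_ne_top_iff_summable_coe.1 ha.ne
    simpa [coe_nnnorm] using h2
  constructor
  · refine aestronglyMeasurable_of_tendsto_ae atTop
      (fun k => Finset.aestronglyMeasurable_sum (Finset.range k)
        fun i _ => (h_int i).aestronglyMeasurable) ?_
    filter_upwards [hae] with a ha
    simpa only [Finset.sum_apply] using ha.of_norm.hasSum.tendsto_sum_nat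
  · refine lt_of_le_of_lt (lintegral_mono_ae ?_) (lt_top_iff_ne_top.2 hG)
    filter_upwards [hae] with a ha
    calc (‖∑' i, F i a‖₊ : ℝ≥0∞) = ENNReal.ofReal ‖∑' i, F i a‖ := by
          exact (ofReal_norm _).symm
      _ ≤ ENNReal.ofReal (∑' i, ‖F i a‖) :=
          ENNReal.ofReal_le_ofReal (norm_tsum_le_tsum_norm ha)
      _ = ∑' i, (‖F i a‖₊ : ℝ≥0∞) := by
          rw [ENNReal.ofReal_tsum_of_nonneg (fun i => norm_nonneg _) ha]
          congr 1
          funext i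
          exact ofReal_norm _

end T5
section T6

lemma simplexVolume_nonneg' {n : ℕ} (τ : Splx n n) : 0 ≤ simplexVolume τ := by
  rw [simplexVolume]
  positivity

lemma support_sum_le' {n : ℕ} (σ : ℕ → Splx n n) (c : ℕ → ℝ) (s : Finset ℕ)
    (f : Splx n n → ℝ) (hf : ∀ τ, 0 ≤ f τ) :
    ∑ τ ∈ (∑ i ∈ s, Finsupp.single (σ i) (c i)).support,
      |(∑ i ∈ s, Finsupp.single (σ i) (c i)) τ| * f τ ≤ ∑ i ∈ s, |c i| * f (σ i) := by
  classical
  set B : FormalSum n n := ∑ i ∈ s, Finsupp.single (σ i) (c i) with hB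
  have hsub : B.support ⊆ s.image σ := by
    intro τ hτ
    by_contra hns
    refine (Finsupp.mem_support_iff.1 hτ) ?_
    rw [hB, Finsupp.finset_sum_apply]
    refine Finset.sum_eq_zero fun i hi => ?_
    rw [Finsupp.single_apply, if_neg]
    intro he
    exact hns (Finset.mem_image.2 ⟨i, hi, he⟩)
  refine le_trans (Finset.sum_le_sum_of_subset_of_nonneg hsub
    fun τ _ _ => mul_nonneg (abs_nonneg _) (hf τ)) ?_
  rw [← Finset.sum_fiberwise_of_maps_to (fun i hi => Finset.mem_image_of_mem σ hi)
    (fun i => |c i| * f (σ i))]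
  refine Finset.sum_le_sum fun τ hτ => ?_
  have h1 : B τ = ∑ i ∈ s.filter (fun i => σ i = τ), c i := by
    rw [hB, Finsupp.finset_sum_apply, Finset.sum_filter]
    refine Finset.sum_congr rfl fun i _ => ?_
    rw [Finsupp.single_apply]
  calc |B τ| * f τ ≤ (∑ i ∈ s.filter (fun i => σ i = τ), |c i|) * f τ := by
        refine mul_le_mul_of_nonneg_right ?_ (hf τ)
        rw [h1]
        exact Finset.abs_sum_le_sum_abs _ _
    _ = ∑ i ∈ s.filter (fun i => σ i = τ), |c i| * f τ := by rw [Finset.sum_mul]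
    _ = ∑ i ∈ s.filter (fun i => σ i = τ), |c i| * f (σ i) :=
        Finset.sum_congr rfl fun i hi => by rw [(Finset.mem_filter.1 hi).2]

lemma naturalNorm_le' {n : ℕ} (hn : 1 ≤ n) (σ : ℕ → Splx n n) (c : ℕ → ℝ) (s : Finset ℕ) :
    naturalNorm n n n (∑ i ∈ s, Finsupp.single (σ i) (c i)) ≤
      ∑ i ∈ s, |c i| * simplexVolume (σ i) := by
  set B : FormalSum n n := ∑ i ∈ s, Finsupp.single (σ i) (c i) with hB
  have h1 : coordPlanes n n = {(Finset.univ : Finset (Fin n))} := by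
    ext t
    simp only [coordPlanes, Finset.mem_filter, Finset.mem_univ, true_and,
      Finset.mem_singleton]
    simpa using Finset.card_eq_iff_eq_univ t
  have hcp : ∀ τ : Splx n n, coordProj n Finset.univ ∘ τ = τ := by
    intro τ
    funext j
    show coordProj n Finset.univ (τ j) = τ j
    ext i
    simp [coordProj]
  have hexp : ((n : ℝ) / (n : ℝ)) = 1 := by
    have h : (n : ℝ) ≠ 0 := Nat.cast_ne_zero.2 (by omega)
    exact div_self h
  rw [naturalNorm, Nat.sub_self]
  show naturalNormAux n 0 n (↑n) B ≤ _
  rw [naturalNormAux, h1, Finset.sum_singleton, projMass]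
  have hbdd : BddBelow {r | ∃ C : FormalSum n n, ChainEquiv C B ∧
      r = ∑ τ ∈ C.support, |C τ| * simplexVolume (coordProj n Finset.univ ∘ τ) ^ ((n:ℝ)/n)} := by
    refine ⟨0, ?_⟩
    rintro r ⟨C, _, rfl⟩
    exact Finset.sum_nonneg fun τ _ => mul_nonneg (abs_nonneg _)
      (Real.rpow_nonneg (simplexVolume_nonneg' _) _)
  have hmem : (∑ τ ∈ B.support, |B τ| * simplexVolume (coordProj n Finset.univ ∘ τ) ^ ((n:ℝ)/n))
      ∈ {r | ∃ C : FormalSum n n, ChainEquiv C B ∧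
      r = ∑ τ ∈ C.support, |C τ| * simplexVolume (coordProj n Finset.univ ∘ τ) ^ ((n:ℝ)/n)} := by
    refine ⟨B, ?_, rfl⟩
    show B - B ∈ nullChains n n
    rw [sub_self]
    exact (nullChains n n).zero_mem
  refine le_trans (csInf_le hbdd hmem) ?_
  have heq : ∀ τ : Splx n n,
      |B τ| * simplexVolume (coordProj n Finset.univ ∘ τ) ^ ((n:ℝ)/n)
        = |B τ| * simplexVolume τ := by
    intro τ
    rw [hcp τ, hexp, Real.rpow_one]
  rw [Finset.sum_congr rfl fun τ _ => heq τ]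
  exact support_sum_le' σ c s simplexVolume simplexVolume_nonneg'

end T6
theorem lebesgue_compatibility_infinite_chains' (n : ℕ) (hn : 1 ≤ n)
    (a : ℕ → ℝ) (σ : ℕ → Splx n n)
    (hsum : Summable fun i => |a i| * simplexVolume (σ i)) :
    NatCauchy n n n (fun k => ∑ i ∈ Finset.range k, Finsupp.single (σ i) (a i)) ∧
    Integrable (coeffFun a σ) volume ∧
    (∀ g : Euc n → ℝ, Continuous g → (∃ Kb, ∀ x, |g x| ≤ Kb) →
      Filter.Tendsto
        (fun k => chainIntegral (∑ i ∈ Finset.range k, Finsupp.single (σ i) (a i))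
          (fun x v => g x * Matrix.det (Matrix.of fun i j => v j i)))
        Filter.atTop (nhds (∫ x, coeffFun a σ x * g x))) := by
  classical
  -- shared notation
  set E : ℕ → Set (Euc n) := fun i => interior (convexHull ℝ (Set.range (σ i))) with hEdef
  have hEmeas : ∀ i, MeasurableSet (E i) := fun i => isOpen_interior.measurableSet
  have hEfin : ∀ i, volume (E i) < ⊤ := fun i =>
    lt_of_le_of_lt (measure_mono interior_subset)
      (((Set.finite_range (σ i)).isCompact_convexHull ℝ).measure_lt_top)
  set C : ℝ := (Nat.factorial n : ℝ) * (volume (stdEuc' n)).toReal with hCdef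
  have hC0 : 0 ≤ C := mul_nonneg (by positivity) ENNReal.toReal_nonneg
  have habs : ∀ τ : Splx n n,
      |Matrix.det (Matrix.of fun i j : Fin n => (τ j.succ - τ 0) i)|
        = (Nat.factorial n : ℝ) * simplexVolume τ := by
    intro τ
    rw [simplexVolume_eq_abs_det']
    field_simp
  have hEvol : ∀ i, (volume (E i)).toReal ≤ C * simplexVolume (σ i) := by
    intro i
    have h1 : volume (E i) ≤ volume (convexHull ℝ (Set.range (σ i))) :=
      measure_mono interior_subset
    rw [volume_hull'] at h1
    calc (volume (E i)).toReal
        ≤ (ENNReal.ofReal |Matrix.det (Matrix.of fun i' j : Fin n => (σ i j.succ - σ i 0) i')|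
            * volume (stdEuc' n)).toReal := ENNReal.toReal_mono
            (ENNReal.mul_ne_top ENNReal.ofReal_ne_top stdEuc'_isCompact.measure_lt_top.ne) h1
      _ = |Matrix.det (Matrix.of fun i' j : Fin n => (σ i j.succ - σ i 0) i')|
            * (volume (stdEuc' n)).toReal := by
          rw [ENNReal.toReal_mul, ENNReal.toReal_ofReal (abs_nonneg _)]
      _ = C * simplexVolume (σ i) := by
          rw [habs (σ i)]
          ring
  have hsgn : ∀ τ : Splx n n, |orientSign τ| ≤ 1 := by
    intro τ
    rw [orientSign]
    rcases Real.sign_apply_eq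
      (Matrix.det (Matrix.of fun i j : Fin n => (τ j.succ - τ 0) i)) with h | h | h <;>
      rw [h] <;> norm_num
  have habs2 : ∀ i, |orientSign (σ i) * a i| ≤ |a i| := by
    intro i
    rw [abs_mul]
    calc |orientSign (σ i)| * |a i| ≤ 1 * |a i| :=
          mul_le_mul_of_nonneg_right (hsgn (σ i)) (abs_nonneg _)
      _ = |a i| := one_mul _
  refine ⟨?_, ?_, ?_⟩
  · -- Part 1 : NatCauchy
    intro ε hε
    have hc : CauchySeq (fun m => ∑ i ∈ Finset.range m, |a i| * simplexVolume (σ i)) :=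
      hsum.hasSum.tendsto_sum_nat.cauchySeq
    obtain ⟨N, hN⟩ := Metric.cauchySeq_iff.1 hc ε hε
    refine ⟨N, fun j hj k hk => ?_⟩
    rcases le_total k j with h | h
    · have hdiff : (∑ i ∈ Finset.range j, Finsupp.single (σ i) (a i)) -
          (∑ i ∈ Finset.range k, Finsupp.single (σ i) (a i)) =
          ∑ i ∈ Finset.Ico k j, Finsupp.single (σ i) (a i) :=
        (Finset.sum_Ico_eq_sub _ h).symm
      rw [hdiff]
      refine lt_of_le_of_lt (naturalNorm_le' hn σ a (Finset.Ico k j)) ?_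
      rw [Finset.sum_Ico_eq_sub _ h]
      calc (∑ i ∈ Finset.range j, |a i| * simplexVolume (σ i))
            - ∑ i ∈ Finset.range k, |a i| * simplexVolume (σ i)
          ≤ |(∑ i ∈ Finset.range j, |a i| * simplexVolume (σ i))
            - ∑ i ∈ Finset.range k, |a i| * simplexVolume (σ i)| := le_abs_self _
        _ < ε := by rw [← Real.dist_eq]; exact hN j hj k hk
    · have hdiff : (∑ i ∈ Finset.range j, Finsupp.single (σ i) (a i)) -
          (∑ i ∈ Finset.range k, Finsupp.single (σ i) (a i)) =
          ∑ i ∈ Finset.Ico j k, Finsupp.single (σ i) (-a i) := by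
      -- = -(∑ range k - ∑ range j)
        have h1 : ∀ i : ℕ, Finsupp.single (σ i) (-a i) = - Finsupp.single (σ i) (a i) :=
          fun i => Finsupp.single_neg _ _
        rw [Finset.sum_congr rfl fun i _ => h1 i, Finset.sum_neg_distrib,
          Finset.sum_Ico_eq_sub _ h, neg_sub]
      rw [hdiff]
      refine lt_of_le_of_lt (naturalNorm_le' hn σ (fun i => -a i) (Finset.Ico j k)) ?_
      simp only [abs_neg]
      rw [Finset.sum_Ico_eq_sub _ h]
      calc (∑ i ∈ Finset.range k, |a i| * simplexVolume (σ i))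
            - ∑ i ∈ Finset.range j, |a i| * simplexVolume (σ i)
          ≤ |(∑ i ∈ Finset.range k, |a i| * simplexVolume (σ i))
            - ∑ i ∈ Finset.range j, |a i| * simplexVolume (σ i)| := le_abs_self _
        _ < ε := by rw [← Real.dist_eq]; exact hN k hk j hj
  · -- Part 2 : integrability of the coefficient function
    rw [show coeffFun a σ
        = fun x => ∑' i, (E i).indicator (fun _ => orientSign (σ i) * a i) x from rfl]
    refine integrable_tsum_of_norm' (fun i => ?_) ?_
    · exact (integrable_indicator_iff (hEmeas i)).2 (integrableOn_const (hEfin i).ne)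
    · refine Summable.of_nonneg_of_le
        (fun i => integral_nonneg fun x => norm_nonneg _) (fun i => ?_) (hsum.mul_left C)
      have h1 : (fun x => ‖(E i).indicator (fun _ => orientSign (σ i) * a i) x‖)
          = (E i).indicator (fun _ => ‖orientSign (σ i) * a i‖) := by
        funext x
        rw [norm_indicator_eq_indicator_norm]
      rw [h1, integral_indicator_const _ (hEmeas i), smul_eq_mul]
      calc (volume (E i)).toReal * ‖orientSign (σ i) * a i‖
          ≤ (C * simplexVolume (σ i)) * |a i| := by
            refine mul_le_mul (hEvol i) ?_ (norm_nonneg _)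
              (mul_nonneg hC0 (simplexVolume_nonneg' _))
            rw [Real.norm_eq_abs]
            exact habs2 i
        _ = C * (|a i| * simplexVolume (σ i)) := by ring
  · -- Part 3 : compatibility with the Lebesgue integral
    intro g hg hKbex
    obtain ⟨Kb, hKb⟩ := hKbex
    have hKb0 : 0 ≤ Kb := le_trans (abs_nonneg _) (hKb 0)
    set F : ℕ → Euc n → ℝ :=
      fun i x => (E i).indicator (fun _ => orientSign (σ i) * a i) x * g x with hFdef
    have hFind : ∀ i, F i = (E i).indicator (fun x => (orientSign (σ i) * a i) * g x) := by
      intro i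
      funext x
      exact (Set.indicator_mul_left _ _ _).symm
    have hgint : ∀ i, IntegrableOn (fun x => (orientSign (σ i) * a i) * g x) (E i) volume := by
      intro i
      refine Integrable.mono'
        (g := fun _ => |orientSign (σ i) * a i| * Kb)
        (integrableOn_const (hEfin i).ne)
        ((continuous_const.mul hg)).aestronglyMeasurable.restrict
        (ae_of_all _ fun x => ?_)
      rw [Real.norm_eq_abs, abs_mul]
      exact mul_le_mul_of_nonneg_left (hKb x) (abs_nonneg _)
    have h_int : ∀ i, Integrable (F i) volume := by
      intro i
      rw [hFind i]
      exact (integrable_indicator_iff (hEmeas i)).2 (hgint i)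
    have h_norm : ∀ i, ∫ x, ‖F i x‖ ≤ (Kb * C) * (|a i| * simplexVolume (σ i)) := by
      intro i
      have h1 : (fun x => ‖F i x‖)
          = (E i).indicator (fun x => ‖(orientSign (σ i) * a i) * g x‖) := by
        funext x
        rw [hFind i, norm_indicator_eq_indicator_norm]
      rw [h1, integral_indicator (hEmeas i)]
      refine le_trans (setIntegral_mono_on (g := fun _ => |orientSign (σ i) * a i| * Kb)
        (hgint i).norm
        (integrableOn_const (hEfin i).ne) (hEmeas i) (fun x _ => ?_)) ?_
      · rw [Real.norm_eq_abs, abs_mul]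
        exact mul_le_mul_of_nonneg_left (hKb x) (abs_nonneg _)
      · rw [setIntegral_const, smul_eq_mul]
        calc (volume (E i)).toReal * (|orientSign (σ i) * a i| * Kb)
            ≤ (C * simplexVolume (σ i)) * (|a i| * Kb) := by
              refine mul_le_mul (hEvol i)
                (mul_le_mul_of_nonneg_right (habs2 i) hKb0)
                (mul_nonneg (abs_nonneg _) hKb0)
                (mul_nonneg hC0 (simplexVolume_nonneg' _))
          _ = (Kb * C) * (|a i| * simplexVolume (σ i)) := by ring
    have h_sum : Summable fun i => ∫ x, ‖F i x‖ :=
      Summable.of_nonneg_of_le (fun i => integral_nonneg fun x => norm_nonneg _)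
        h_norm (hsum.mul_left (Kb * C))
    have hHasSum := MeasureTheory.hasSum_integral_of_summable_integral_norm h_int h_sum
    have hlim : (∫ x, ∑' i, F i x) = ∫ x, coeffFun a σ x * g x := by
      refine integral_congr_ae (ae_of_all _ fun x => ?_)
      exact tsum_mul_right
    have hterm : ∀ k, chainIntegral (∑ i ∈ Finset.range k, Finsupp.single (σ i) (a i))
        (fun x v => g x * Matrix.det (Matrix.of fun i j => v j i))
        = ∑ i ∈ Finset.range k, ∫ x, F i x := by
      intro k
      rw [chainIntegral, map_sum]
      refine Finset.sum_congr rfl fun i _ => ?_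
      rw [chainIntegralL, Finsupp.linearCombination_single, key_integral' (σ i) g]
      have hFint : ∫ x, F i x = (orientSign (σ i) * a i) * ∫ x in E i, g x := by
        rw [hFind i, integral_indicator (hEmeas i), MeasureTheory.integral_const_mul]
      rw [hFint, smul_eq_mul]
      ring
    rw [← hlim]
    exact Filter.Tendsto.congr (fun k => (hterm k).symm) hHasSum.tendsto_sum_nat
/-- **compatibility with the Lebesgue integral for infinite chains of finite
mass.** Let `n ≥ 1` and `Σᵢ aᵢσᵢ` a formal infinite sum of oriented `n`-simplices in `ℝ^n`
with `Σ |aᵢ| Mₙ(σᵢ) < ∞`.  Then the partial sums form a Cauchy sequence in the `n`-natural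
norm (converging to an element `A ∈ X_{n,n}(ℝ^n)`); the coefficient function of the
infinite chain is integrable; and for every bounded continuous `n`-form
`ω = g dx₁∧⋯∧dxₙ`, the extended integral `L_ω·A` equals `∫_{ℝ^n} A(x) g(x) dmₙ(x)`. -/
theorem lebesgue_compatibility_infinite_chains (n : ℕ) (hn : 1 ≤ n)
    (a : ℕ → ℝ) (σ : ℕ → Splx n n)
    (hsum : Summable fun i => |a i| * simplexVolume (σ i)) :
    NatCauchy n n n (fun k => ∑ i ∈ Finset.range k, Finsupp.single (σ i) (a i)) ∧
    Integrable (coeffFun a σ) volume ∧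
    (∀ g : Euc n → ℝ, Continuous g → (∃ Kb, ∀ x, |g x| ≤ Kb) →
      Filter.Tendsto
        (fun k => chainIntegral (∑ i ∈ Finset.range k, Finsupp.single (σ i) (a i))
          (fun x v => g x * Matrix.det (Matrix.of fun i j => v j i)))
        Filter.atTop (nhds (∫ x, coeffFun a σ x * g x))) := by
  exact lebesgue_compatibility_infinite_chains' n hn a σ hsum

end
end
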